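/- arXiv:2004.01141 — 2 statements merged into one kernel-verified Lean document; each statement's English description precedes it below -/
import Mathlib

section
/- Let 0 < θ_1 < 1, 0 < θ_2 < θ_1, let θ_k, θ_ℓ ∈ (0, θ_2], let c ∈ ℝ, and set μ* := −c + θ_1 + (1−θ_1)θ_2 (the mean reward of policy (1,2) when ε = 0). With μ((k,ℓ)) := −c + θ_k + (1−θ_k)θ_ℓ, μ((k,1)) := −c + θ_k + (1−θ_k)θ_1, and μ((ℓ,1)) := −c + θ_ℓ + (1−θ_ℓ)θ_1, we have (μ* − μ((k,ℓ))) − (μ* − μ((k,1))) − (1−θ_k)(μ* − μ((ℓ,1))) ≥ (1−θ_k)(θ_1 − θ_2) > 0. -/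
/-- Let `0 < θ_1 < 1`, `0 < θ_2 < θ_1`, `θ_k, θ_ℓ ∈ (0, θ_2]`, `c ∈ ℝ`,
and set `μ* := −c + θ_1 + (1−θ_1)θ_2` (the mean reward of `(1,2)` when `ε = 0`). With
`μ((k,ℓ)) = −c + θ_k + (1−θ_k)θ_ℓ`, `μ((k,1)) = −c + θ_k + (1−θ_k)θ_1` and
`μ((ℓ,1)) = −c + θ_ℓ + (1−θ_ℓ)θ_1`, we have
`(μ*−μ((k,ℓ))) − (μ*−μ((k,1))) − (1−θ_k)(μ*−μ((ℓ,1))) ≥ (1−θ_k)(θ_1−θ_2) > 0`. -/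
theorem stmt5 (θ1 θ2 θk θl c : ℝ)
    (h10 : 0 < θ1) (h11 : θ1 < 1) (h20 : 0 < θ2) (h21 : θ2 < θ1)
    (hk : θk ∈ Set.Ioc (0 : ℝ) θ2) (hl : θl ∈ Set.Ioc (0 : ℝ) θ2) :
    (((-c + θ1 + (1 - θ1) * θ2) - (-c + θk + (1 - θk) * θl))
      - ((-c + θ1 + (1 - θ1) * θ2) - (-c + θk + (1 - θk) * θ1))
      - (1 - θk) * ((-c + θ1 + (1 - θ1) * θ2) - (-c + θl + (1 - θl) * θ1))
        ≥ (1 - θk) * (θ1 - θ2)) ∧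
    (0 < (1 - θk) * (θ1 - θ2)) := by
  obtain ⟨hk0, hk2⟩ := hk
  obtain ⟨hl0, hl2⟩ := hl
  constructor
  · have h1k : (0:ℝ) ≤ 1 - θk := by linarith
    nlinarith [mul_nonneg (mul_nonneg h1k h10.le) (sub_nonneg.2 hl2)]
  · have : θk < 1 := lt_of_le_of_lt (hk2.trans h21.le) h11
    nlinarith
end

section
/- Let ε ∈ (0,1/2), 0 < x < q ≤ θ_1 < 1, and p0(y) := εy + (1−ε)(1−y). Then p0(θ_1)·I(x,q) ≤ (1−ε)x·log(x/q) + ε(1−x)·log((1−x)/(1−q)) + p0(x)·log(p0(x)/p0(q)), where I(x,q) := x log(x/q) + (1−x) log((1−x)/(1−q)). -/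
open Real

/-- Bernoulli KL nonnegativity. -/
lemma kl_nonneg_aux {x t : ℝ} (hx0 : 0 < x) (hx1 : x < 1) (hxt : x ≤ t) (ht1 : t < 1) :
    0 ≤ x * (Real.log x - Real.log t) + (1 - x) * (Real.log (1 - x) - Real.log (1 - t)) := by
  have ht0 : 0 < t := lt_of_lt_of_le hx0 hxt
  have h1 : Real.log t - Real.log x ≤ t / x - 1 := by
    have := Real.log_le_sub_one_of_pos (show (0:ℝ) < t / x from div_pos ht0 hx0)
    rwa [Real.log_div ht0.ne' hx0.ne'] at this
  have h2 : Real.log (1 - t) - Real.log (1 - x) ≤ (1 - t) / (1 - x) - 1 := by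
    have := Real.log_le_sub_one_of_pos
      (show (0:ℝ) < (1 - t) / (1 - x) from div_pos (by linarith) (by linarith))
    rwa [Real.log_div (by linarith) (by linarith : (1:ℝ) - x ≠ 0)] at this
  have hx1' : (0:ℝ) < 1 - x := by linarith
  have e1 : x * (t / x - 1) = t - x := by field_simp
  have e2 : (1 - x) * ((1 - t) / (1 - x) - 1) = x - t := by field_simp; ring
  nlinarith [mul_le_mul_of_nonneg_left h1 hx0.le, mul_le_mul_of_nonneg_left h2 hx1'.le]

/-- For `ε ∈ (0,1/2)`, `0 < x < q ≤ θ_1 < 1` and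
`p0(y) := εy + (1−ε)(1−y)`:
`p0(θ_1)·I(x,q) ≤ (1−ε)x·log(x/q) + ε(1−x)·log((1−x)/(1−q)) + p0(x)·log(p0(x)/p0(q))`,
where `I(x,q) := x log(x/q) + (1−x) log((1−x)/(1−q))`. -/
theorem stmt13 (ε x q θ1 : ℝ) (hε0 : 0 < ε) (hε : ε < 1 / 2)
    (hx0 : 0 < x) (hxq : x < q) (hqθ : q ≤ θ1) (hθ1 : θ1 < 1) :
    (ε * θ1 + (1 - ε) * (1 - θ1)) *
        (x * Real.log (x / q) + (1 - x) * Real.log ((1 - x) / (1 - q)))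
      ≤ (1 - ε) * x * Real.log (x / q)
        + ε * (1 - x) * Real.log ((1 - x) / (1 - q))
        + (ε * x + (1 - ε) * (1 - x)) *
            Real.log ((ε * x + (1 - ε) * (1 - x)) / (ε * q + (1 - ε) * (1 - q))) := by
  have hq1 : q < 1 := lt_of_le_of_lt hqθ hθ1
  have hx1 : x < 1 := hxq.trans hq1
  have hq0 : 0 < q := hx0.trans hxq
  have hε1 : ε < 1 := by linarith
  set P : ℝ → ℝ := fun t => ε * t + (1 - ε) * (1 - t) with hPdef
  have hPpos : ∀ t : ℝ, 0 ≤ t → t ≤ 1 → 0 < P t := by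
    intro t h0 h1
    simp only [hPdef]
    nlinarith [mul_le_mul_of_nonneg_right (show ε ≤ 1 - ε by linarith)
      (show (0:ℝ) ≤ 1 - t by linarith), mul_nonneg hε0.le h0]
  have hPx : 0 < P x := hPpos x hx0.le hx1.le
  -- the function g
  set g : ℝ → ℝ := fun t =>
    (1 - ε) * x * (Real.log x - Real.log t)
      + ε * (1 - x) * (Real.log (1 - x) - Real.log (1 - t))
      + P x * (Real.log (P x) - Real.log (P t))
      - P t * (x * (Real.log x - Real.log t)
          + (1 - x) * (Real.log (1 - x) - Real.log (1 - t))) with hgdef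
  -- derivative of g on the interior
  have hderiv : ∀ t ∈ Set.Ioo x q, HasDerivAt g
      ((1 - 2*ε) * (P x / P t - 1
        + (x * (Real.log x - Real.log t)
            + (1 - x) * (Real.log (1 - x) - Real.log (1 - t))))) t := by
    intro t ht
    have ht0 : 0 < t := hx0.trans ht.1
    have ht1 : t < 1 := ht.2.trans hq1
    have hPt : 0 < P t := hPpos t ht0.le ht1.le
    have hlog1 : HasDerivAt (fun s : ℝ => Real.log s) t⁻¹ t := Real.hasDerivAt_log ht0.ne'
    have hlin2 : HasDerivAt (fun s : ℝ => 1 - s) (-1) t := by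
      simpa using (hasDerivAt_id t).const_sub 1
    have hlog2 : HasDerivAt (fun s : ℝ => Real.log (1 - s)) (-1 / (1 - t)) t :=
      hlin2.log (by linarith)
    have hlinP : HasDerivAt P (2*ε - 1) t := by
      have h1 : HasDerivAt (fun s : ℝ => ε * s) ε t := by
        simpa using (hasDerivAt_id t).const_mul ε
      have h2 : HasDerivAt (fun s : ℝ => (1 - ε) * (1 - s)) (-(1 - ε)) t := by
        simpa using hlin2.const_mul (1 - ε)
      have := h1.add h2
      exact this.congr_deriv (by ring)
    have hlogP : HasDerivAt (fun s : ℝ => Real.log (P s)) ((2*ε - 1) / P t) t :=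
      hlinP.log hPt.ne'
    have hA : HasDerivAt (fun s : ℝ => (1 - ε) * x * (Real.log x - Real.log s))
        ((1 - ε) * x * (0 - t⁻¹)) t :=
      (((hasDerivAt_const t (Real.log x)).sub hlog1).const_mul _)
    have hB : HasDerivAt (fun s : ℝ => ε * (1 - x) * (Real.log (1 - x) - Real.log (1 - s)))
        (ε * (1 - x) * (0 - (-1 / (1 - t)))) t :=
      (((hasDerivAt_const t (Real.log (1 - x))).sub hlog2).const_mul _)
    have hC : HasDerivAt (fun s : ℝ => P x * (Real.log (P x) - Real.log (P s)))
        (P x * (0 - (2*ε - 1) / P t)) t :=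
      (((hasDerivAt_const t (Real.log (P x))).sub hlogP).const_mul _)
    have hI : HasDerivAt (fun s : ℝ => x * (Real.log x - Real.log s)
        + (1 - x) * (Real.log (1 - x) - Real.log (1 - s)))
        (x * (0 - t⁻¹) + (1 - x) * (0 - (-1 / (1 - t)))) t :=
      ((((hasDerivAt_const t (Real.log x)).sub hlog1).const_mul _).add
        (((hasDerivAt_const t (Real.log (1 - x))).sub hlog2).const_mul _))
    have hD : HasDerivAt (fun s : ℝ => P s * (x * (Real.log x - Real.log s)
        + (1 - x) * (Real.log (1 - x) - Real.log (1 - s))))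
        ((2*ε - 1) * (x * (Real.log x - Real.log t)
          + (1 - x) * (Real.log (1 - x) - Real.log (1 - t)))
          + P t * (x * (0 - t⁻¹) + (1 - x) * (0 - (-1 / (1 - t))))) t :=
      hlinP.mul hI
    have H := ((hA.add hB).add hC).sub hD
    refine H.congr_deriv ?_
    have h1t : (1:ℝ) - t ≠ 0 := by linarith
    field_simp
    ring
  -- g is monotone on [x, q]
  have hmono : MonotoneOn g (Set.Icc x q) := by
    apply monotoneOn_of_deriv_nonneg (convex_Icc x q)
    · -- continuity
      rw [hgdef]
      have hlogc : ContinuousOn (fun t : ℝ => Real.log t) (Set.Icc x q) := by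
        apply ContinuousOn.log continuousOn_id
        intro t ht; exact (hx0.trans_le ht.1).ne'
      have hlogc2 : ContinuousOn (fun t : ℝ => Real.log (1 - t)) (Set.Icc x q) := by
        apply ContinuousOn.log (by fun_prop)
        intro t ht; have : t < 1 := lt_of_le_of_lt ht.2 hq1; intro h; linarith [sub_eq_zero.mp h]
      have hlogcP : ContinuousOn (fun t : ℝ => Real.log (P t)) (Set.Icc x q) := by
        apply ContinuousOn.log (by fun_prop)
        intro t ht
        exact (hPpos t (hx0.le.trans ht.1) (ht.2.trans hq1.le)).ne'
      have hPc : ContinuousOn P (Set.Icc x q) := by fun_prop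
      fun_prop
    · rw [interior_Icc]
      intro t ht
      exact (hderiv t ht).differentiableAt.differentiableWithinAt
    · rw [interior_Icc]
      intro t ht
      rw [(hderiv t ht).deriv]
      have ht0 : 0 < t := hx0.trans ht.1
      have ht1 : t < 1 := ht.2.trans hq1
      have hPt : 0 < P t := hPpos t ht0.le ht1.le
      have hPle : P t ≤ P x := by
        simp only [hPdef]; nlinarith [ht.1.le]
      have h1 : (1:ℝ) ≤ P x / P t := (one_le_div hPt).mpr hPle
      have h2 : 0 ≤ x * (Real.log x - Real.log t)
          + (1 - x) * (Real.log (1 - x) - Real.log (1 - t)) :=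
        kl_nonneg_aux hx0 hx1 ht.1.le ht1
      have h3 : (0:ℝ) < 1 - 2*ε := by linarith
      nlinarith
  have hgx : g x = 0 := by simp [hgdef]
  have hgq : 0 ≤ g q := by
    rw [← hgx]
    exact hmono (Set.left_mem_Icc.mpr hxq.le) (Set.right_mem_Icc.mpr hxq.le) hxq.le
  -- translate logs of quotients
  have hPq : 0 < P q := hPpos q hq0.le hq1.le
  have e1 : Real.log (x / q) = Real.log x - Real.log q := Real.log_div hx0.ne' hq0.ne'
  have e2 : Real.log ((1 - x) / (1 - q)) = Real.log (1 - x) - Real.log (1 - q) :=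
    Real.log_div (by linarith) (by linarith : (1:ℝ) - q ≠ 0)
  have e3 : Real.log ((ε * x + (1 - ε) * (1 - x)) / (ε * q + (1 - ε) * (1 - q)))
      = Real.log (P x) - Real.log (P q) := Real.log_div hPx.ne' hPq.ne'
  rw [e1, e2, e3]
  have hI0 : 0 ≤ x * (Real.log x - Real.log q)
      + (1 - x) * (Real.log (1 - x) - Real.log (1 - q)) :=
    kl_nonneg_aux hx0 hx1 hxq.le hq1
  have hPθ : ε * θ1 + (1 - ε) * (1 - θ1) ≤ P q := by
    simp only [hPdef]; nlinarith
  have key : P q * (x * (Real.log x - Real.log q)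
      + (1 - x) * (Real.log (1 - x) - Real.log (1 - q)))
      ≤ (1 - ε) * x * (Real.log x - Real.log q)
        + ε * (1 - x) * (Real.log (1 - x) - Real.log (1 - q))
        + P x * (Real.log (P x) - Real.log (P q)) := by
    simp only [hgdef] at hgq; linarith
  calc (ε * θ1 + (1 - ε) * (1 - θ1)) *
        (x * (Real.log x - Real.log q) + (1 - x) * (Real.log (1 - x) - Real.log (1 - q)))
      ≤ P q * (x * (Real.log x - Real.log q)
          + (1 - x) * (Real.log (1 - x) - Real.log (1 - q))) :=
        mul_le_mul_of_nonneg_right hPθ hI0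
    _ ≤ _ := key
end
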